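/- Let U ⊆ ℝ² be a nonempty connected open set and let V : U → ℝ be smooth. If V is compatible with the Killing tensor K(β) on U (i.e., the Bertrand–Darboux one-form of V and K(β) is closed on U) for every β ∈ ℝ⁶, then V is constant on U. In other words, a potential compatible with the full six-dimensional space of Killing two-tensors of the Euclidean plane is necessarily constant. -/

import Mathlib

open Real

/-- Partial derivative with respect to the first Cartesian coordinate. -/
noncomputable def pd1 (f : ℝ × ℝ → ℝ) (x : ℝ × ℝ) : ℝ :=
  deriv (fun t => f (t, x.2)) x.1

/-- Partial derivative with respect to the second Cartesian coordinate. -/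
noncomputable def pd2 (f : ℝ × ℝ → ℝ) (x : ℝ × ℝ) : ℝ :=
  deriv (fun t => f (x.1, t)) x.2

/-- Component `K¹¹` of the general Killing two-tensor of the Euclidean plane. -/
def K11 (β : Fin 6 → ℝ) (x : ℝ × ℝ) : ℝ := β 0 + 2 * β 3 * x.2 + β 5 * x.2 ^ 2

/-- Component `K¹² = K²¹` of the general Killing two-tensor of the Euclidean plane. -/
def K12 (β : Fin 6 → ℝ) (x : ℝ × ℝ) : ℝ := β 2 - β 3 * x.1 - β 4 * x.2 - β 5 * x.1 * x.2

/-- Component `K²²` of the general Killing two-tensor of the Euclidean plane. -/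
def K22 (β : Fin 6 → ℝ) (x : ℝ × ℝ) : ℝ := β 1 + 2 * β 4 * x.1 + β 5 * x.1 ^ 2

/-- `V` is compatible with `K(β)` on `U` : the Bertrand–Darboux one-form
`(K¹¹∂₁V + K¹²∂₂V)dx₁ + (K¹²∂₁V + K²²∂₂V)dx₂` is closed on `U`. -/
def Compatible (β : Fin 6 → ℝ) (V : ℝ × ℝ → ℝ) (U : Set (ℝ × ℝ)) : Prop :=
  ∀ x ∈ U,
    pd2 (fun y => K11 β y * pd1 V y + K12 β y * pd2 V y) x
      = pd1 (fun y => K12 β y * pd1 V y + K22 β y * pd2 V y) x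

lemma hasDerivAt_horiz (f : ℝ × ℝ → ℝ) (x : ℝ × ℝ) (hf : DifferentiableAt ℝ f x) :
    HasDerivAt (fun t => f (t, x.2)) (fderiv ℝ f x (1, 0)) x.1 := by
  have h : HasDerivAt (fun t : ℝ => (t, x.2)) ((1 : ℝ), (0 : ℝ)) x.1 :=
    (hasDerivAt_id x.1).prodMk (hasDerivAt_const x.1 x.2)
  have hfd : HasFDerivAt f (fderiv ℝ f x) (x.1, x.2) := by
    rw [Prod.mk.eta]; exact hf.hasFDerivAt
  exact hfd.comp_hasDerivAt x.1 h

lemma hasDerivAt_vert (f : ℝ × ℝ → ℝ) (x : ℝ × ℝ) (hf : DifferentiableAt ℝ f x) :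
    HasDerivAt (fun t => f (x.1, t)) (fderiv ℝ f x (0, 1)) x.2 := by
  have h : HasDerivAt (fun t : ℝ => (x.1, t)) ((0 : ℝ), (1 : ℝ)) x.2 :=
    (hasDerivAt_const x.2 x.1).prodMk (hasDerivAt_id x.2)
  have hfd : HasFDerivAt f (fderiv ℝ f x) (x.1, x.2) := by
    rw [Prod.mk.eta]; exact hf.hasFDerivAt
  exact hfd.comp_hasDerivAt x.2 h

lemma pd1_eq (f : ℝ × ℝ → ℝ) (x : ℝ × ℝ) (hf : DifferentiableAt ℝ f x) :
    pd1 f x = fderiv ℝ f x (1, 0) := (hasDerivAt_horiz f x hf).deriv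

lemma pd2_eq (f : ℝ × ℝ → ℝ) (x : ℝ × ℝ) (hf : DifferentiableAt ℝ f x) :
    pd2 f x = fderiv ℝ f x (0, 1) := (hasDerivAt_vert f x hf).deriv

/-- The Bertrand–Darboux equation, expanded in second partials. -/
lemma bd_master (U : Set (ℝ × ℝ)) (V : ℝ × ℝ → ℝ) (hopen : IsOpen U)
    (hV : ContDiffOn ℝ (⊤ : ℕ∞) V U)
    (β : Fin 6 → ℝ) (hcom : Compatible β V U) (x : ℝ × ℝ) (hx : x ∈ U) :
    (2 * β 3 + 2 * β 5 * x.2) * fderiv ℝ V x (1, 0)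
        + K11 β x * fderiv ℝ (fun y => fderiv ℝ V y (1, 0)) x (0, 1)
        + (-(β 4) - β 5 * x.1) * fderiv ℝ V x (0, 1)
        + K12 β x * fderiv ℝ (fun y => fderiv ℝ V y (0, 1)) x (0, 1)
      = (-(β 3) - β 5 * x.2) * fderiv ℝ V x (1, 0)
        + K12 β x * fderiv ℝ (fun y => fderiv ℝ V y (1, 0)) x (1, 0)
        + (2 * β 4 + 2 * β 5 * x.1) * fderiv ℝ V x (0, 1)
        + K22 β x * fderiv ℝ (fun y => fderiv ℝ V y (0, 1)) x (1, 0) := by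
  set A : ℝ × ℝ → ℝ := fun y => fderiv ℝ V y (1, 0) with hA
  set B : ℝ × ℝ → ℝ := fun y => fderiv ℝ V y (0, 1) with hB
  have hVd : ∀ y ∈ U, DifferentiableAt ℝ V y := fun y hy =>
    (hV.differentiableOn (by simp)).differentiableAt (hopen.mem_nhds hy)
  have hfd : ∀ y ∈ U, DifferentiableAt ℝ (fderiv ℝ V) y := fun y hy =>
    ((hV.contDiffAt (hopen.mem_nhds hy)).fderiv_right (m := 1) (ENat.natCast_le_of_coe_top_le_withTop le_rfl 2)).differentiableAt (by norm_num)
  have hAd : ∀ y ∈ U, DifferentiableAt ℝ A y := fun y hy =>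
    (hfd y hy).clm_apply (differentiableAt_const _)
  have hBd : ∀ y ∈ U, DifferentiableAt ℝ B y := fun y hy =>
    (hfd y hy).clm_apply (differentiableAt_const _)
  have key := hcom x hx
  -- LHS
  have hUx2 : ∀ᶠ t in nhds x.2, (x.1, t) ∈ U := by
    have : Continuous fun t : ℝ => (x.1, t) := by fun_prop
    have := this.continuousAt (x := x.2)
    exact this.preimage_mem_nhds (by rw [Prod.mk.eta]; exact hopen.mem_nhds hx)
  have hUx1 : ∀ᶠ t in nhds x.1, (t, x.2) ∈ U := by
    have : Continuous fun t : ℝ => (t, x.2) := by fun_prop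
    have := this.continuousAt (x := x.1)
    exact this.preimage_mem_nhds (by rw [Prod.mk.eta]; exact hopen.mem_nhds hx)
  have heqL : (fun t => (fun y => K11 β y * pd1 V y + K12 β y * pd2 V y) (x.1, t))
      =ᶠ[nhds x.2] fun t => K11 β (x.1, t) * A (x.1, t) + K12 β (x.1, t) * B (x.1, t) := by
    filter_upwards [hUx2] with t ht
    rw [pd1_eq V _ (hVd _ ht), pd2_eq V _ (hVd _ ht)]
  have heqR : (fun t => (fun y => K12 β y * pd1 V y + K22 β y * pd2 V y) (t, x.2))
      =ᶠ[nhds x.1] fun t => K12 β (t, x.2) * A (t, x.2) + K22 β (t, x.2) * B (t, x.2) := by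
    filter_upwards [hUx1] with t ht
    rw [pd1_eq V _ (hVd _ ht), pd2_eq V _ (hVd _ ht)]
  -- derivatives of K entries along lines
  have hK11v : HasDerivAt (fun t => K11 β (x.1, t)) (2 * β 3 + 2 * β 5 * x.2) x.2 := by
    have h := ((hasDerivAt_id' x.2).const_mul (2 * β 3)).add
      ((hasDerivAt_pow 2 x.2).const_mul (β 5))
    have h' := (hasDerivAt_const x.2 (β 0)).add h
    have hfun : (fun t => K11 β (x.1, t)) = fun t : ℝ => β 0 + (2 * β 3 * t + β 5 * t ^ 2) := by
      funext t; simp only [K11]; ring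
    rw [hfun]
    refine h'.congr_deriv ?_
    norm_num; ring
  have hK12v : HasDerivAt (fun t => K12 β (x.1, t)) (-(β 4) - β 5 * x.1) x.2 := by
    have h := ((hasDerivAt_id' x.2).const_mul (β 4)).add
      ((hasDerivAt_id' x.2).const_mul (β 5 * x.1))
    have h' := (hasDerivAt_const x.2 (β 2 - β 3 * x.1)).sub h
    have hfun : (fun t => K12 β (x.1, t))
        = fun t : ℝ => β 2 - β 3 * x.1 - (β 4 * t + β 5 * x.1 * t) := by
      funext t; simp only [K12]; ring
    rw [hfun]
    refine h'.congr_deriv ?_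
    ring
  have hK12h : HasDerivAt (fun t => K12 β (t, x.2)) (-(β 3) - β 5 * x.2) x.1 := by
    have h := ((hasDerivAt_id' x.1).const_mul (β 3)).add
      ((hasDerivAt_id' x.1).const_mul (β 5 * x.2))
    have h' := (hasDerivAt_const x.1 (β 2 - β 4 * x.2)).sub h
    have hfun : (fun t => K12 β (t, x.2))
        = fun t : ℝ => β 2 - β 4 * x.2 - (β 3 * t + β 5 * x.2 * t) := by
      funext t; simp only [K12]; ring
    rw [hfun]
    refine h'.congr_deriv ?_
    ring
  have hK22h : HasDerivAt (fun t => K22 β (t, x.2)) (2 * β 4 + 2 * β 5 * x.1) x.1 := by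
    have h := ((hasDerivAt_id' x.1).const_mul (2 * β 4)).add
      ((hasDerivAt_pow 2 x.1).const_mul (β 5))
    have h' := (hasDerivAt_const x.1 (β 1)).add h
    have hfun : (fun t => K22 β (t, x.2)) = fun t : ℝ => β 1 + (2 * β 4 * t + β 5 * t ^ 2) := by
      funext t; simp only [K22]; ring
    rw [hfun]
    refine h'.congr_deriv ?_
    norm_num; ring
  have hAv := hasDerivAt_vert A x (hAd x hx)
  have hBv := hasDerivAt_vert B x (hBd x hx)
  have hAh := hasDerivAt_horiz A x (hAd x hx)
  have hBh := hasDerivAt_horiz B x (hBd x hx)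
  have hL : HasDerivAt (fun t => K11 β (x.1, t) * A (x.1, t) + K12 β (x.1, t) * B (x.1, t))
      ((2 * β 3 + 2 * β 5 * x.2) * A x + K11 β x * fderiv ℝ A x (0, 1)
        + ((-(β 4) - β 5 * x.1) * B x + K12 β x * fderiv ℝ B x (0, 1))) x.2 := by
    have := (hK11v.mul hAv).add (hK12v.mul hBv)
    simp only [Prod.mk.eta] at this; exact this
  have hR : HasDerivAt (fun t => K12 β (t, x.2) * A (t, x.2) + K22 β (t, x.2) * B (t, x.2))
      ((-(β 3) - β 5 * x.2) * A x + K12 β x * fderiv ℝ A x (1, 0)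
        + ((2 * β 4 + 2 * β 5 * x.1) * B x + K22 β x * fderiv ℝ B x (1, 0))) x.1 := by
    have := (hK12h.mul hAh).add (hK22h.mul hBh)
    simp only [Prod.mk.eta] at this; exact this
  have hLval : pd2 (fun y => K11 β y * pd1 V y + K12 β y * pd2 V y) x
      = (2 * β 3 + 2 * β 5 * x.2) * A x + K11 β x * fderiv ℝ A x (0, 1)
        + ((-(β 4) - β 5 * x.1) * B x + K12 β x * fderiv ℝ B x (0, 1)) := by
    rw [pd2, heqL.deriv_eq]; exact hL.deriv
  have hRval : pd1 (fun y => K12 β y * pd1 V y + K22 β y * pd2 V y) x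
      = (-(β 3) - β 5 * x.2) * A x + K12 β x * fderiv ℝ A x (1, 0)
        + ((2 * β 4 + 2 * β 5 * x.1) * B x + K22 β x * fderiv ℝ B x (1, 0)) := by
    rw [pd1, heqR.deriv_eq]; exact hR.deriv
  rw [hLval, hRval] at key
  linarith [key]


/-- A smooth potential on a nonempty connected open set `U ⊆ ℝ²` that is
compatible with the full six-dimensional space of Killing two-tensors of the
Euclidean plane is necessarily constant. -/
theorem compatible_with_all_killing_tensors_imp_constant
    (U : Set (ℝ × ℝ)) (hne : U.Nonempty) (hconn : IsConnected U) (hopen : IsOpen U)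
    (V : ℝ × ℝ → ℝ) (hV : ContDiffOn ℝ (⊤ : ℕ∞) V U)
    (hcompat : ∀ β : Fin 6 → ℝ, Compatible β V U) :
    ∀ x ∈ U, ∀ y ∈ U, V x = V y := by
  have hgrad : ∀ x ∈ U, fderiv ℝ V x = 0 := by
    intro x hx
    have e0 := bd_master U V hopen hV ![1,0,0,0,0,0] (hcompat _) x hx
    have e1 := bd_master U V hopen hV ![0,1,0,0,0,0] (hcompat _) x hx
    have e2 := bd_master U V hopen hV ![0,0,1,0,0,0] (hcompat _) x hx
    have e3 := bd_master U V hopen hV ![0,0,0,1,0,0] (hcompat _) x hx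
    have e4 := bd_master U V hopen hV ![0,0,0,0,1,0] (hcompat _) x hx
    have h5 : ∀ a b c d e : ℝ, (![a, b, c, d, e, 0] : Fin 6 → ℝ) 5 = 0 := fun _ _ _ _ _ => rfl
    have h2 : ∀ a b c d e f : ℝ, (![a, b, c, d, e, f] : Fin 6 → ℝ) 2 = c := fun _ _ _ _ _ _ => rfl
    have h3 : ∀ a b c d e f : ℝ, (![a, b, c, d, e, f] : Fin 6 → ℝ) 3 = d := fun _ _ _ _ _ _ => rfl
    have h4 : ∀ a b c d e f : ℝ, (![a, b, c, d, e, f] : Fin 6 → ℝ) 4 = e := fun _ _ _ _ _ _ => rfl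
    norm_num [h2, h3, h4, h5, K11, K12, K22, Matrix.cons_val_zero, Matrix.cons_val_one, Matrix.head_cons,
      Matrix.cons_val_fin_one, Matrix.cons_val_succ, Matrix.cons_val] at e0 e1 e2 e3 e4
    have ha : fderiv ℝ V x (1, 0) = 0 := by
      linear_combination e3 / 3 - (2 * x.2 / 3) * e0 + (x.1 / 3) * e2
    have hb : fderiv ℝ V x (0, 1) = 0 := by
      linear_combination -e4 / 3 - (x.2 / 3) * e2 + (2 * x.1 / 3) * e1
    refine ContinuousLinearMap.ext fun v => ?_
    have hv : v = v.1 • ((1:ℝ), (0:ℝ)) + v.2 • ((0:ℝ), (1:ℝ)) := by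
      apply Prod.ext <;> simp
    rw [hv, map_add, map_smul, map_smul, ha, hb]
    simp
  haveI : PreconnectedSpace U := Subtype.preconnectedSpace hconn.isPreconnected
  have hlc : IsLocallyConstant (fun p : U => V p) := by
    rw [IsLocallyConstant.iff_eventually_eq]
    rintro ⟨p, hp⟩
    obtain ⟨ε, hε, hball⟩ := Metric.isOpen_iff.1 hopen p hp
    have hdiff : DifferentiableOn ℝ V (Metric.ball p ε) :=
      (hV.differentiableOn (by simp)).mono hball
    have hconst : ∀ z ∈ Metric.ball p ε, V z = V p := fun z hz =>
      (convex_ball p ε).is_const_of_fderivWithin_eq_zero hdiff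
        (fun w hw => by
          rw [fderivWithin_of_isOpen Metric.isOpen_ball hw]; exact hgrad w (hball hw))
        hz (Metric.mem_ball_self hε)
    have hmem : ∀ᶠ q : U in nhds ⟨p, hp⟩, (q : ℝ × ℝ) ∈ Metric.ball p ε :=
      (continuous_subtype_val.continuousAt).preimage_mem_nhds (Metric.ball_mem_nhds _ hε)
    filter_upwards [hmem] with q hq using hconst q hq
  intro x hx y hy
  exact hlc.apply_eq_of_preconnectedSpace ⟨x, hx⟩ ⟨y, hy⟩
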